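/- For every j ∈ {1,…,m} and every x in the open unit polydisc, the function G(x) := ∫_1^∞ U(t,x) dt satisfies ∂_jG(x) = b_j · ∫_1^∞ t^{b_1+⋯+b_m−c} · (t−1)^{c−a−1} · (t−x_j)^{−b_j−1} · ∏_{1≤i≤m, i≠j} (t−x_i)^{−b_i} dt; that is, differentiation under the integral sign is valid and ∂/∂x_j applied to the Euler-type integrand multiplies the factor (t−x_j)^{−b_j} by b_j/(t−x_j). -/

import Mathlib

noncomputable section

/-- The open unit polydisc in `ℂ^m`. -/
def unitPolydisc (m : ℕ) : Set (Fin m → ℂ) :=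
  {x | ∀ i, ‖(x i)‖ < 1}

/-- The partial derivative `∂_i F`. -/
def pd {m : ℕ} (F : (Fin m → ℂ) → ℂ) (i : Fin m) (x : Fin m → ℂ) : ℂ :=
  fderiv ℂ F x (Pi.single i 1)

/-- The second partial derivative `∂_i ∂_j F`. -/
def pd2 {m : ℕ} (F : (Fin m → ℂ) → ℂ) (i j : Fin m) (x : Fin m → ℂ) : ℂ :=
  pd (pd F j) i x

/-- The Euler-type integrand
`U(t,x) = t^{b_1+⋯+b_m-c} (t-1)^{c-a-1} ∏_i (t-x_i)^{-b_i}`. -/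
def eulerU (m : ℕ) (a : ℂ) (b : Fin m → ℂ) (c : ℂ) (x : Fin m → ℂ) (t : ℝ) : ℂ :=
  (t : ℂ) ^ ((∑ i, b i) - c) * ((t : ℂ) - 1) ^ (c - a - 1) *
    ∏ i, ((t : ℂ) - x i) ^ (-b i)

/-- The Euler-type integral `G(x) = ∫_1^∞ U(t,x) dt`. -/
def eulerG (m : ℕ) (a : ℂ) (b : Fin m → ℂ) (c : ℂ) (x : Fin m → ℂ) : ℂ :=
  ∫ t in Set.Ioi (1 : ℝ), eulerU m a b c x t

namespace EulerAux

open MeasureTheory Set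

/-- Constant in the uniform bound for `|(t-w)^s|`. -/
def D (r : ℝ) (s : ℂ) : ℝ :=
  Real.exp (Real.pi / 2 * |s.im|) * max ((2:ℝ) ^ s.re) ((1 - r) ^ s.re)

lemma D_nonneg (r : ℝ) (s : ℂ) : 0 ≤ D r s :=
  mul_nonneg (Real.exp_pos _).le
    (le_trans (Real.rpow_nonneg (by norm_num) _) (le_max_left _ _))

lemma abs_cpow_le {r : ℝ} (hr0 : 0 ≤ r) (hr1 : r < 1) {t : ℝ} (ht : 1 < t)
    {w : ℂ} (hw : ‖w‖ ≤ r) (s : ℂ) :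
    ‖(((t : ℂ) - w) ^ s)‖ ≤ D r s * t ^ s.re := by
  have ht0 : (0:ℝ) < t := by linarith
  have h2 : ‖(t : ℂ)‖ = t := by
    rw [Complex.norm_real, Real.norm_eq_abs, abs_of_pos ht0]
  have hlb : (1 - r) * t ≤ ‖((t : ℂ) - w)‖ := by
    have h1 : ‖(t : ℂ)‖ - ‖w‖ ≤ ‖((t : ℂ) - w)‖ := by
      simpa using norm_sub_norm_le (t : ℂ) w
    nlinarith
  have hub : ‖((t : ℂ) - w)‖ ≤ 2 * t := by
    have h1 : ‖((t : ℂ) - w)‖ ≤ ‖(t : ℂ)‖ + ‖w‖ := by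
      simpa using norm_sub_le (t : ℂ) w
    nlinarith
  have hpos : (0:ℝ) < (1 - r) * t := by nlinarith
  have habs_pos : 0 < ‖((t : ℂ) - w)‖ := lt_of_lt_of_le hpos hlb
  have hz0 : ((t : ℂ) - w) ≠ 0 := by
    intro h
    rw [h, norm_zero] at habs_pos
    exact lt_irrefl _ habs_pos
  have hre : 0 ≤ ((t : ℂ) - w).re := by
    have h3 := Complex.re_le_norm w
    simp only [Complex.sub_re, Complex.ofReal_re]
    linarith
  have harg : |((t : ℂ) - w).arg| ≤ Real.pi / 2 :=
    Complex.abs_arg_le_pi_div_two_iff.mpr hre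
  rw [Complex.norm_cpow_of_ne_zero hz0]
  have hbase : ‖((t : ℂ) - w)‖ ^ s.re ≤
      max ((2:ℝ) ^ s.re) ((1 - r) ^ s.re) * t ^ s.re := by
    rcases le_or_gt 0 s.re with hs | hs
    · calc ‖((t : ℂ) - w)‖ ^ s.re ≤ (2 * t) ^ s.re :=
            Real.rpow_le_rpow (norm_nonneg _) hub hs
        _ = 2 ^ s.re * t ^ s.re := Real.mul_rpow (by norm_num) ht0.le
        _ ≤ _ := mul_le_mul_of_nonneg_right (le_max_left _ _) (Real.rpow_nonneg ht0.le _)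
    · calc ‖((t : ℂ) - w)‖ ^ s.re ≤ ((1 - r) * t) ^ s.re :=
            Real.rpow_le_rpow_of_nonpos hpos hlb hs.le
        _ = (1 - r) ^ s.re * t ^ s.re := Real.mul_rpow (by linarith) ht0.le
        _ ≤ _ := mul_le_mul_of_nonneg_right (le_max_right _ _) (Real.rpow_nonneg ht0.le _)
  have hexp : -(((t : ℂ) - w).arg * s.im) ≤ Real.pi / 2 * |s.im| := by
    have h1 : -(((t : ℂ) - w).arg * s.im) ≤ |((t : ℂ) - w).arg * s.im| := neg_le_abs _
    have h2' : |((t : ℂ) - w).arg * s.im| = |((t : ℂ) - w).arg| * |s.im| := abs_mul _ _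
    have h3 : |((t : ℂ) - w).arg| * |s.im| ≤ Real.pi / 2 * |s.im| :=
      mul_le_mul_of_nonneg_right harg (abs_nonneg _)
    linarith
  have hmaxnn : 0 ≤ max ((2:ℝ) ^ s.re) ((1 - r) ^ s.re) * t ^ s.re :=
    mul_nonneg (le_trans (Real.rpow_nonneg (by norm_num) _) (le_max_left _ _))
      (Real.rpow_nonneg ht0.le _)
  calc ‖((t : ℂ) - w)‖ ^ s.re / Real.exp (((t : ℂ) - w).arg * s.im)
      = ‖((t : ℂ) - w)‖ ^ s.re * Real.exp (-(((t : ℂ) - w).arg * s.im)) := by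
        rw [Real.exp_neg]; ring
    _ ≤ (max ((2:ℝ) ^ s.re) ((1 - r) ^ s.re) * t ^ s.re) * Real.exp (Real.pi / 2 * |s.im|) :=
        mul_le_mul hbase (Real.exp_le_exp.mpr hexp) (Real.exp_pos _).le hmaxnn
    _ = D r s * t ^ s.re := by rw [D]; ring

lemma integrableOn_pq {p q : ℝ} (hq : -1 < q) (hpq : p + q < -1) :
    IntegrableOn (fun t : ℝ => t ^ p * (t - 1) ^ q) (Set.Ioi (1:ℝ)) := by
  have h12 : IntegrableOn (fun t : ℝ => t ^ p * (t - 1) ^ q) (Set.Ioc (1:ℝ) 2) := by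
    have hbase : IntegrableOn (fun t : ℝ => (t - 1) ^ q) (Set.Ioc (1:ℝ) 2) := by
      have h := (intervalIntegral.intervalIntegrable_rpow' (a := 0) (b := 1) hq).comp_sub_right 1
      rw [intervalIntegrable_iff_integrableOn_Ioc_of_le (by norm_num)] at h
      rw [show (0:ℝ) + 1 = 1 by norm_num, show (1:ℝ) + 1 = 2 by norm_num] at h
      exact h
    refine ((hbase.const_mul (max 1 ((2:ℝ) ^ p))).mono' ?_ ?_)
    · refine ContinuousOn.aestronglyMeasurable ?_ measurableSet_Ioc
      refine ContinuousOn.mul ?_ ?_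
      · exact ContinuousOn.rpow_const (continuous_id.continuousOn)
          (fun t htm => Or.inl (ne_of_gt (by linarith [htm.1])))
      · exact ContinuousOn.rpow_const ((continuous_id.sub continuous_const).continuousOn)
          (fun t htm => Or.inl (ne_of_gt (by nlinarith [htm.1] : (0:ℝ) < t - 1)))
    · rw [ae_restrict_iff' measurableSet_Ioc]
      filter_upwards with t htm
      have ht1 : 1 < t := htm.1
      have hnn : 0 ≤ t ^ p * (t - 1) ^ q :=
        mul_nonneg (Real.rpow_nonneg (by linarith) _) (Real.rpow_nonneg (by linarith) _)
      rw [Real.norm_eq_abs, abs_of_nonneg hnn]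
      have htp : t ^ p ≤ max 1 ((2:ℝ) ^ p) := by
        rcases le_or_gt 0 p with hp | hp
        · exact le_max_of_le_right (Real.rpow_le_rpow (by linarith) htm.2 hp)
        · refine le_max_of_le_left ?_
          have := Real.rpow_le_rpow_of_nonpos one_pos ht1.le hp.le
          simpa using this
      exact mul_le_mul_of_nonneg_right htp (Real.rpow_nonneg (by linarith) _)
  have h2i : IntegrableOn (fun t : ℝ => t ^ p * (t - 1) ^ q) (Set.Ioi (2:ℝ)) := by
    have hbase := integrableOn_Ioi_rpow_of_lt hpq (by norm_num : (0:ℝ) < 2)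
    refine (((hbase.const_mul (max 1 ((2:ℝ) ^ (-q)))).mono' ?_ ?_))
    · refine ContinuousOn.aestronglyMeasurable ?_ measurableSet_Ioi
      refine ContinuousOn.mul ?_ ?_
      · exact ContinuousOn.rpow_const (continuous_id.continuousOn)
          (fun t htm => Or.inl (ne_of_gt (by simp only [Set.mem_Ioi] at htm; linarith)))
      · exact ContinuousOn.rpow_const ((continuous_id.sub continuous_const).continuousOn)
          (fun t htm => Or.inl
            (ne_of_gt (by simp only [Set.mem_Ioi] at htm; nlinarith : (0:ℝ) < t - 1)))
    · rw [ae_restrict_iff' measurableSet_Ioi]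
      filter_upwards with t htm
      have ht2 : 2 < t := htm
      have hnn : 0 ≤ t ^ p * (t - 1) ^ q :=
        mul_nonneg (Real.rpow_nonneg (by linarith) _) (Real.rpow_nonneg (by linarith) _)
      rw [Real.norm_eq_abs, abs_of_nonneg hnn]
      have h1q : (t - 1) ^ q ≤ max 1 ((2:ℝ) ^ (-q)) * t ^ q := by
        rcases le_or_gt 0 q with hqq | hqq
        · calc (t - 1) ^ q ≤ t ^ q := Real.rpow_le_rpow (by linarith) (by linarith) hqq
            _ ≤ max 1 ((2:ℝ) ^ (-q)) * t ^ q :=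
                le_mul_of_one_le_left (Real.rpow_nonneg (by linarith) _) (le_max_left _ _)
        · have hhalf : t / 2 ≤ t - 1 := by linarith
          calc (t - 1) ^ q ≤ (t / 2) ^ q :=
                Real.rpow_le_rpow_of_nonpos (by linarith) hhalf hqq.le
            _ = 2 ^ (-q) * t ^ q := by
                rw [Real.div_rpow (by linarith) (by norm_num), Real.rpow_neg (by norm_num)]
                ring
            _ ≤ max 1 ((2:ℝ) ^ (-q)) * t ^ q :=
                mul_le_mul_of_nonneg_right (le_max_right _ _) (Real.rpow_nonneg (by linarith) _)
      calc t ^ p * (t - 1) ^ q ≤ t ^ p * (max 1 ((2:ℝ) ^ (-q)) * t ^ q) :=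
            mul_le_mul_of_nonneg_left h1q (Real.rpow_nonneg (by linarith) _)
        _ = max 1 ((2:ℝ) ^ (-q)) * t ^ (p + q) := by
            rw [Real.rpow_add (by linarith)]; ring
  have hu := h12.union h2i
  rwa [Set.Ioc_union_Ioi_eq_Ioi (by norm_num : (1:ℝ) ≤ 2)] at hu

lemma prod_bound {m : ℕ} {r : ℝ} (hr0 : 0 ≤ r) (hr1 : r < 1) {t : ℝ} (ht : 1 < t)
    {x' : Fin m → ℂ} (hx' : ∀ i, ‖(x' i)‖ ≤ r) (s : Fin m → ℂ)
    (u : Finset (Fin m)) :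
    ‖(∏ i ∈ u, ((t : ℂ) - x' i) ^ s i)‖ ≤
      (∏ i ∈ u, D r (s i)) * t ^ (∑ i ∈ u, (s i).re) := by
  rw [norm_prod, Real.rpow_sum_of_pos (by linarith : (0:ℝ) < t), ← Finset.prod_mul_distrib]
  exact Finset.prod_le_prod (fun i _ => norm_nonneg _)
    (fun i _ => abs_cpow_le hr0 hr1 ht (hx' i) (s i))

lemma abs_eulerU_le {m : ℕ} (a : ℂ) (b : Fin m → ℂ) (c : ℂ) {r : ℝ} (hr0 : 0 ≤ r)
    (hr1 : r < 1) {t : ℝ} (ht : 1 < t) {x' : Fin m → ℂ}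
    (hx' : ∀ i, ‖(x' i)‖ ≤ r) :
    ‖(eulerU m a b c x' t)‖ ≤
      (∏ i, D r (-b i)) * (t ^ (-c.re) * (t - 1) ^ (c.re - a.re - 1)) := by
  have ht0 : (0:ℝ) < t := by linarith
  have h1 : ‖((t : ℂ) ^ ((∑ i, b i) - c))‖ = t ^ ((∑ i, b i) - c).re :=
    Complex.norm_cpow_eq_rpow_re_of_pos ht0 _
  have h2 : ‖(((t : ℂ) - 1) ^ (c - a - 1))‖ = (t - 1) ^ (c - a - 1).re := by
    rw [show ((t : ℂ) - 1) = ((t - 1 : ℝ) : ℂ) by push_cast; ring]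
    exact Complex.norm_cpow_eq_rpow_re_of_pos (by linarith) _
  have h3 := prod_bound hr0 hr1 ht hx' (fun i => -b i) Finset.univ
  rw [eulerU, norm_mul, norm_mul, h1, h2]
  calc t ^ ((∑ i, b i) - c).re * (t - 1) ^ (c - a - 1).re *
        ‖(∏ i, ((t : ℂ) - x' i) ^ (-b i))‖
      ≤ t ^ ((∑ i, b i) - c).re * (t - 1) ^ (c - a - 1).re *
        ((∏ i, D r (-b i)) * t ^ (∑ i, (-b i).re)) := by
        refine mul_le_mul_of_nonneg_left h3 ?_
        exact mul_nonneg (Real.rpow_nonneg ht0.le _) (Real.rpow_nonneg (by linarith) _)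
    _ = (∏ i, D r (-b i)) *
        (t ^ ((∑ i, b i) - c).re * t ^ (∑ i, (-b i).re) * (t - 1) ^ (c - a - 1).re) := by ring
    _ = (∏ i, D r (-b i)) * (t ^ (-c.re) * (t - 1) ^ (c.re - a.re - 1)) := by
        have hE : ((∑ i, b i) - c).re + (∑ i, (-b i).re) = -c.re := by
          simp only [Complex.sub_re, Complex.re_sum, Complex.neg_re]
          rw [Finset.sum_neg_distrib]
          ring
        have hB : (c - a - 1).re = c.re - a.re - 1 := by
          simp [Complex.sub_re, Complex.one_re]
        rw [← Real.rpow_add ht0, hE, hB]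

/-- The coefficient of `∂/∂x_i` in the derivative of the Euler integrand. -/
def coefU (m : ℕ) (a : ℂ) (b : Fin m → ℂ) (c : ℂ) (x : Fin m → ℂ) (t : ℝ) (i : Fin m) : ℂ :=
  (t : ℂ) ^ ((∑ k, b k) - c) * ((t : ℂ) - 1) ^ (c - a - 1) *
    (b i * ((t : ℂ) - x i) ^ (-b i - 1)) * ∏ k ∈ Finset.univ.erase i, ((t : ℂ) - x k) ^ (-b k)

/-- The full Fréchet derivative of `x ↦ U(t,x)`. -/
def Uderiv (m : ℕ) (a : ℂ) (b : Fin m → ℂ) (c : ℂ) (x : Fin m → ℂ) (t : ℝ) :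
    (Fin m → ℂ) →L[ℂ] ℂ :=
  ∑ i, coefU m a b c x t i • (ContinuousLinearMap.proj i : ((Fin m) → ℂ) →L[ℂ] ℂ)

lemma abs_coefU_le {m : ℕ} (a : ℂ) (b : Fin m → ℂ) (c : ℂ) {r : ℝ} (hr0 : 0 ≤ r)
    (hr1 : r < 1) {t : ℝ} (ht : 1 < t) {x' : Fin m → ℂ}
    (hx' : ∀ i, ‖(x' i)‖ ≤ r) (i : Fin m) :
    ‖(coefU m a b c x' t i)‖ ≤
      (‖(b i)‖ * D r (-b i - 1) * ∏ k ∈ Finset.univ.erase i, D r (-b k)) *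
        (t ^ (-c.re - 1) * (t - 1) ^ (c.re - a.re - 1)) := by
  have ht0 : (0:ℝ) < t := by linarith
  have h1 : ‖((t : ℂ) ^ ((∑ k, b k) - c))‖ = t ^ ((∑ k, b k) - c).re :=
    Complex.norm_cpow_eq_rpow_re_of_pos ht0 _
  have h2 : ‖(((t : ℂ) - 1) ^ (c - a - 1))‖ = (t - 1) ^ (c - a - 1).re := by
    rw [show ((t : ℂ) - 1) = ((t - 1 : ℝ) : ℂ) by push_cast; ring]
    exact Complex.norm_cpow_eq_rpow_re_of_pos (by linarith) _
  have h3 := abs_cpow_le hr0 hr1 ht (hx' i) (-b i - 1)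
  have h4 := prod_bound hr0 hr1 ht hx' (fun k => -b k) (Finset.univ.erase i)
  have htm1 : (0:ℝ) ≤ (t - 1) ^ (c - a - 1).re := Real.rpow_nonneg (by linarith) _
  rw [coefU, norm_mul, norm_mul, norm_mul, norm_mul, h1, h2]
  calc t ^ ((∑ k, b k) - c).re * (t - 1) ^ (c - a - 1).re *
        (‖(b i)‖ * ‖(((t : ℂ) - x' i) ^ (-b i - 1))‖) *
        ‖(∏ k ∈ Finset.univ.erase i, ((t : ℂ) - x' k) ^ (-b k))‖
      ≤ t ^ ((∑ k, b k) - c).re * (t - 1) ^ (c - a - 1).re *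
        (‖(b i)‖ * (D r (-b i - 1) * t ^ (-b i - 1).re)) *
        ((∏ k ∈ Finset.univ.erase i, D r (-b k)) *
          t ^ (∑ k ∈ Finset.univ.erase i, (-b k).re)) := by
        refine mul_le_mul ?_ h4 (norm_nonneg _) ?_
        · refine mul_le_mul_of_nonneg_left
            (mul_le_mul_of_nonneg_left h3 (norm_nonneg _)) ?_
          exact mul_nonneg (Real.rpow_nonneg ht0.le _) htm1
        · exact mul_nonneg
            (mul_nonneg (Real.rpow_nonneg ht0.le _) htm1)
            (mul_nonneg (norm_nonneg _)
              (mul_nonneg (D_nonneg r _) (Real.rpow_nonneg ht0.le _)))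
    _ = (‖(b i)‖ * D r (-b i - 1) * ∏ k ∈ Finset.univ.erase i, D r (-b k)) *
        (t ^ ((∑ k, b k) - c).re * t ^ (-b i - 1).re *
          t ^ (∑ k ∈ Finset.univ.erase i, (-b k).re) * (t - 1) ^ (c - a - 1).re) := by ring
    _ = (‖(b i)‖ * D r (-b i - 1) * ∏ k ∈ Finset.univ.erase i, D r (-b k)) *
        (t ^ (-c.re - 1) * (t - 1) ^ (c.re - a.re - 1)) := by
        have hsum := Finset.add_sum_erase Finset.univ (fun k => (b k).re) (Finset.mem_univ i)
        have hE : ((∑ k, b k) - c).re + (-b i - 1).re +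
            (∑ k ∈ Finset.univ.erase i, (-b k).re) = -c.re - 1 := by
          simp only [Complex.sub_re, Complex.re_sum, Complex.neg_re, Complex.one_re]
          rw [Finset.sum_neg_distrib]
          linarith
        have hB : (c - a - 1).re = c.re - a.re - 1 := by
          simp [Complex.sub_re, Complex.one_re]
        rw [← Real.rpow_add ht0, ← Real.rpow_add ht0, hE, hB]

lemma norm_proj_le (m : ℕ) (i : Fin m) :
    ‖(ContinuousLinearMap.proj i : ((Fin m) → ℂ) →L[ℂ] ℂ)‖ ≤ 1 :=
  ContinuousLinearMap.opNorm_le_bound _ zero_le_one fun y => by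
    rw [ContinuousLinearMap.proj_apply, one_mul]; exact norm_le_pi_norm y i

lemma norm_Uderiv_le {m : ℕ} (a : ℂ) (b : Fin m → ℂ) (c : ℂ) {r : ℝ} (hr0 : 0 ≤ r)
    (hr1 : r < 1) {t : ℝ} (ht : 1 < t) {x' : Fin m → ℂ}
    (hx' : ∀ i, ‖(x' i)‖ ≤ r) :
    ‖Uderiv m a b c x' t‖ ≤
      (∑ i, ‖(b i)‖ * D r (-b i - 1) * ∏ k ∈ Finset.univ.erase i, D r (-b k)) *
        (t ^ (-c.re - 1) * (t - 1) ^ (c.re - a.re - 1)) := by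
  rw [Uderiv]
  calc ‖∑ i, coefU m a b c x' t i • (ContinuousLinearMap.proj i : ((Fin m) → ℂ) →L[ℂ] ℂ)‖
      ≤ ∑ i, ‖coefU m a b c x' t i • (ContinuousLinearMap.proj i : ((Fin m) → ℂ) →L[ℂ] ℂ)‖ :=
        norm_sum_le _ _
    _ ≤ ∑ i, (‖(b i)‖ * D r (-b i - 1) * ∏ k ∈ Finset.univ.erase i, D r (-b k)) *
        (t ^ (-c.re - 1) * (t - 1) ^ (c.re - a.re - 1)) := by
        refine Finset.sum_le_sum fun i _ => ?_
        refine le_trans (ContinuousLinearMap.opNorm_smul_le _ _) ?_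
        calc ‖coefU m a b c x' t i‖ * ‖(ContinuousLinearMap.proj i : ((Fin m) → ℂ) →L[ℂ] ℂ)‖
            ≤ ‖coefU m a b c x' t i‖ * 1 :=
              mul_le_mul_of_nonneg_left (norm_proj_le m i) (norm_nonneg _)
          _ = ‖(coefU m a b c x' t i)‖ := by rw [mul_one]
          _ ≤ _ := abs_coefU_le a b c hr0 hr1 ht hx' i
    _ = (∑ i, ‖(b i)‖ * D r (-b i - 1) * ∏ k ∈ Finset.univ.erase i, D r (-b k)) *
        (t ^ (-c.re - 1) * (t - 1) ^ (c.re - a.re - 1)) := by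
        rw [← Finset.sum_mul]

lemma continuousOn_cpow_sub {w : ℂ} (hw : w.re ≤ 1) (s : ℂ) :
    ContinuousOn (fun t : ℝ => ((t : ℂ) - w) ^ s) (Set.Ioi (1:ℝ)) := by
  intro t htmem
  have ht : (1:ℝ) < t := htmem
  apply ContinuousAt.continuousWithinAt
  have h1 : ContinuousAt (fun z : ℂ => z ^ s) ((t : ℂ) - w) :=
    continuousAt_cpow_const (Complex.mem_slitPlane_iff.mpr
      (Or.inl (by simp only [Complex.sub_re, Complex.ofReal_re]; linarith)))
  have h2 : ContinuousAt (fun u : ℝ => (u : ℂ) - w) t :=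
    (Complex.continuous_ofReal.continuousAt).sub continuousAt_const
  exact ContinuousAt.comp (f := fun u : ℝ => (u : ℂ) - w) (x := t) h1 h2

lemma continuousOn_eulerU (m : ℕ) (a : ℂ) (b : Fin m → ℂ) (c : ℂ) {x' : Fin m → ℂ}
    (hx' : ∀ i, (x' i).re ≤ 1) :
    ContinuousOn (fun t : ℝ => eulerU m a b c x' t) (Set.Ioi (1:ℝ)) := by
  unfold eulerU
  refine ContinuousOn.mul (ContinuousOn.mul ?_ ?_) ?_
  · have := continuousOn_cpow_sub (w := 0) (by norm_num) ((∑ i, b i) - c)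
    simpa using this
  · exact continuousOn_cpow_sub (by norm_num) _
  · exact continuousOn_finset_prod _ fun i _ => continuousOn_cpow_sub (hx' i) _

lemma continuousOn_coefU (m : ℕ) (a : ℂ) (b : Fin m → ℂ) (c : ℂ) {x' : Fin m → ℂ}
    (hx' : ∀ i, (x' i).re ≤ 1) (i : Fin m) :
    ContinuousOn (fun t : ℝ => coefU m a b c x' t i) (Set.Ioi (1:ℝ)) := by
  unfold coefU
  refine ContinuousOn.mul (ContinuousOn.mul (ContinuousOn.mul ?_ ?_) ?_) ?_
  · have := continuousOn_cpow_sub (w := 0) (by norm_num) ((∑ k, b k) - c)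
    simpa using this
  · exact continuousOn_cpow_sub (by norm_num) _
  · exact continuousOn_const.mul (continuousOn_cpow_sub (hx' i) _)
  · exact continuousOn_finset_prod _ fun k _ => continuousOn_cpow_sub (hx' k) _

lemma continuousOn_Uderiv (m : ℕ) (a : ℂ) (b : Fin m → ℂ) (c : ℂ) {x' : Fin m → ℂ}
    (hx' : ∀ i, (x' i).re ≤ 1) :
    ContinuousOn (fun t : ℝ => Uderiv m a b c x' t) (Set.Ioi (1:ℝ)) := by
  unfold Uderiv
  exact continuousOn_finset_sum _ fun i _ =>
    (continuousOn_coefU m a b c hx' i).smul continuousOn_const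

lemma hasFDerivAt_eulerU (m : ℕ) (a : ℂ) (b : Fin m → ℂ) (c : ℂ) {t : ℝ} (ht : 1 < t)
    {x : Fin m → ℂ} (hxre : ∀ i, (x i).re < 1) :
    HasFDerivAt (fun y => eulerU m a b c y t) (Uderiv m a b c x t) x := by
  classical
  have hfi : ∀ i ∈ Finset.univ, HasFDerivAt (fun y : Fin m → ℂ => ((t : ℂ) - y i) ^ (-b i))
      ((b i * ((t : ℂ) - x i) ^ (-b i - 1)) •
        (ContinuousLinearMap.proj i : ((Fin m) → ℂ) →L[ℂ] ℂ)) x := by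
    intro i _
    have hslit : ((t : ℂ) - x i) ∈ Complex.slitPlane :=
      Complex.mem_slitPlane_iff.mpr (Or.inl
        (by simp only [Complex.sub_re, Complex.ofReal_re]; linarith [hxre i]))
    have h1 : HasDerivAt (fun z : ℂ => (t : ℂ) - z) (-1) (x i) :=
      (hasDerivAt_id (x i)).const_sub (t : ℂ)
    have h2 : HasDerivAt (fun z : ℂ => ((t : ℂ) - z) ^ (-b i))
        (b i * ((t : ℂ) - x i) ^ (-b i - 1)) (x i) := by
      have h3 := h1.cpow_const (c := -b i) hslit
      convert h3 using 1
      ring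
    exact h2.comp_hasFDerivAt x
      ((ContinuousLinearMap.proj i : ((Fin m) → ℂ) →L[ℂ] ℂ).hasFDerivAt)
  have hprod := HasFDerivAt.finset_prod hfi
  have hmul := hprod.const_mul ((t : ℂ) ^ ((∑ k, b k) - c) * ((t : ℂ) - 1) ^ (c - a - 1))
  have heq : Uderiv m a b c x t =
      ((t : ℂ) ^ ((∑ k, b k) - c) * ((t : ℂ) - 1) ^ (c - a - 1)) •
      ∑ i ∈ Finset.univ, (∏ k ∈ Finset.univ.erase i, ((t : ℂ) - x k) ^ (-b k)) •
        ((b i * ((t : ℂ) - x i) ^ (-b i - 1)) •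
          (ContinuousLinearMap.proj i : ((Fin m) → ℂ) →L[ℂ] ℂ)) := by
    rw [Finset.smul_sum]
    refine Finset.sum_congr rfl fun i _ => ?_
    rw [smul_smul, smul_smul]
    congr 1
    rw [coefU]
    ring
  rw [heq]
  exact hmul

end EulerAux

open MeasureTheory Set EulerAux in
/-- differentiation under the integral sign for the Euler-type
integral: `∂_j G(x) = b_j ∫_1^∞ t^{Σb-c}(t-1)^{c-a-1}(t-x_j)^{-b_j-1}
∏_{i≠j}(t-x_i)^{-b_i} dt` on the unit polydisc. -/
theorem eulerG_partial_deriv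
    (m : ℕ) (hm : 1 ≤ m) (a : ℂ) (b : Fin m → ℂ) (c : ℂ)
    (ha : 0 < a.re) (hac : a.re < c.re)
    (j : Fin m) (x : Fin m → ℂ) (hx : ∀ i, ‖(x i)‖ < 1) :
    pd (eulerG m a b c) j x =
      b j * ∫ t in Set.Ioi (1 : ℝ),
        (t : ℂ) ^ ((∑ i, b i) - c) * ((t : ℂ) - 1) ^ (c - a - 1) *
          ((t : ℂ) - x j) ^ (-b j - 1) *
          ∏ i ∈ Finset.univ.erase j, ((t : ℂ) - x i) ^ (-b i) := by
  classical
  haveI : Nonempty (Fin m) := Fin.pos_iff_nonempty.mp hm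
  have hMmem := Finset.univ_nonempty (α := Fin m)
  obtain ⟨M, hM0, hM1, hMle⟩ : ∃ M : ℝ, 0 ≤ M ∧ M < 1 ∧ ∀ i, ‖(x i)‖ ≤ M := by
    refine ⟨Finset.univ.sup' hMmem (fun i => ‖(x i)‖), ?_, ?_, ?_⟩
    · exact le_trans (norm_nonneg (x j))
        (Finset.le_sup' (fun i => ‖(x i)‖) (Finset.mem_univ j))
    · rw [Finset.sup'_lt_iff]
      exact fun i _ => hx i
    · exact fun i => Finset.le_sup' (fun i => ‖(x i)‖) (Finset.mem_univ i)
  set r : ℝ := (1 + M) / 2 with hrdef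
  set ε : ℝ := (1 - M) / 2 with hedef
  have hε : 0 < ε := by rw [hedef]; linarith
  have hr0 : 0 ≤ r := by rw [hrdef]; linarith
  have hr1 : r < 1 := by rw [hrdef]; linarith
  have hxr : ∀ i, ‖(x i)‖ ≤ r := fun i => by
    rw [hrdef]; linarith [hMle i]
  have hball : ∀ y ∈ Metric.ball x ε, ∀ i, ‖(y i)‖ ≤ r := by
    intro y hy i
    have h1 : dist y x < ε := Metric.mem_ball.mp hy
    have h2 : dist (y i) (x i) ≤ dist y x := dist_le_pi_dist y x i
    have h3 : ‖(y i - x i)‖ = dist (y i) (x i) := (Complex.dist_eq _ _).symm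
    have h4 : ‖(y i)‖ ≤ ‖(x i)‖ + ‖(y i - x i)‖ := by
      calc ‖(y i)‖ = ‖(x i + (y i - x i))‖ := by ring_nf
        _ ≤ _ := norm_add_le _ _
    have h6 : ‖(x i)‖ ≤ M := hMle i
    rw [hrdef]
    rw [hedef] at h1
    linarith [h3 ▸ h2]
  have hq1 : (-1:ℝ) < c.re - a.re - 1 := by linarith
  -- integrable dominating functions
  have hint1 : IntegrableOn
      (fun t : ℝ => (∏ i, D r (-b i)) * (t ^ (-c.re) * (t - 1) ^ (c.re - a.re - 1)))
      (Set.Ioi (1:ℝ)) :=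
    (integrableOn_pq hq1 (by linarith)).const_mul _
  have hint2 : IntegrableOn
      (fun t : ℝ =>
        (∑ i, ‖(b i)‖ * D r (-b i - 1) * ∏ k ∈ Finset.univ.erase i, D r (-b k)) *
          (t ^ (-c.re - 1) * (t - 1) ^ (c.re - a.re - 1)))
      (Set.Ioi (1:ℝ)) :=
    (integrableOn_pq hq1 (by linarith)).const_mul _
  have hre1 : ∀ y : Fin m → ℂ, (∀ i, ‖(y i)‖ ≤ r) → ∀ i, (y i).re ≤ 1 :=
    fun y hy i => le_trans (Complex.re_le_norm _) (le_trans (hy i) hr1.le)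
  have hF'meas : AEStronglyMeasurable (fun t : ℝ => Uderiv m a b c x t)
      (volume.restrict (Set.Ioi (1:ℝ))) :=
    (continuousOn_Uderiv m a b c (hre1 x hxr)).aestronglyMeasurable measurableSet_Ioi
  have key : HasFDerivAt (fun y => ∫ t in Set.Ioi (1:ℝ), eulerU m a b c y t)
      (∫ t in Set.Ioi (1:ℝ), Uderiv m a b c x t) x := by
    apply hasFDerivAt_integral_of_dominated_of_fderiv_le
      (F' := fun y t => Uderiv m a b c y t)
      (bound := fun t =>
        (∑ i, ‖(b i)‖ * D r (-b i - 1) * ∏ k ∈ Finset.univ.erase i, D r (-b k)) *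
          (t ^ (-c.re - 1) * (t - 1) ^ (c.re - a.re - 1))) (Metric.ball_mem_nhds x hε)
    · filter_upwards [Metric.ball_mem_nhds x hε] with y hy
      exact (continuousOn_eulerU m a b c (hre1 y (hball y hy))).aestronglyMeasurable
        measurableSet_Ioi
    · refine hint1.mono'
        ((continuousOn_eulerU m a b c (hre1 x hxr)).aestronglyMeasurable measurableSet_Ioi) ?_
      rw [ae_restrict_iff' measurableSet_Ioi]
      filter_upwards with t ht
      exact abs_eulerU_le a b c hr0 hr1 (Set.mem_Ioi.mp ht) hxr
    · exact hF'meas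
    · rw [ae_restrict_iff' measurableSet_Ioi]
      filter_upwards with t ht
      intro y hy
      exact norm_Uderiv_le a b c hr0 hr1 (Set.mem_Ioi.mp ht) (hball y hy)
    · exact hint2
    · rw [ae_restrict_iff' measurableSet_Ioi]
      filter_upwards with t ht
      intro y hy
      exact hasFDerivAt_eulerU m a b c (Set.mem_Ioi.mp ht)
        (fun i => lt_of_le_of_lt (le_trans (Complex.re_le_norm _) (hball y hy i)) hr1)
  have hUint : Integrable (fun t : ℝ => Uderiv m a b c x t)
      (volume.restrict (Set.Ioi (1:ℝ))) := by
    refine hint2.mono' hF'meas ?_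
    rw [ae_restrict_iff' measurableSet_Ioi]
    filter_upwards with t ht
    exact norm_Uderiv_le a b c hr0 hr1 (Set.mem_Ioi.mp ht) hxr
  have hpd : pd (eulerG m a b c) j x =
      (∫ t in Set.Ioi (1:ℝ), Uderiv m a b c x t) (Pi.single j 1) := by
    rw [pd]
    have heg : eulerG m a b c = fun y => ∫ t in Set.Ioi (1:ℝ), eulerU m a b c y t := rfl
    rw [heg, key.fderiv]
  rw [hpd, ContinuousLinearMap.integral_apply hUint]
  have hfun : ∀ t : ℝ, (Uderiv m a b c x t) (Pi.single j 1) =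
      b j * ((t : ℂ) ^ ((∑ i, b i) - c) * ((t : ℂ) - 1) ^ (c - a - 1) *
        ((t : ℂ) - x j) ^ (-b j - 1) *
        ∏ i ∈ Finset.univ.erase j, ((t : ℂ) - x i) ^ (-b i)) := by
    intro t
    rw [Uderiv, ContinuousLinearMap.sum_apply]
    simp only [ContinuousLinearMap.smul_apply, ContinuousLinearMap.proj_apply]
    rw [Finset.sum_eq_single j]
    · rw [Pi.single_eq_same, coefU, smul_eq_mul, mul_one]
      ring
    · intro i _ hij
      rw [Pi.single_eq_of_ne hij, smul_zero]
    · intro h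
      exact absurd (Finset.mem_univ j) h
  rw [show (fun t : ℝ => (Uderiv m a b c x t) (Pi.single j 1)) =
      fun t : ℝ => b j * ((t : ℂ) ^ ((∑ i, b i) - c) * ((t : ℂ) - 1) ^ (c - a - 1) *
        ((t : ℂ) - x j) ^ (-b j - 1) *
        ∏ i ∈ Finset.univ.erase j, ((t : ℂ) - x i) ^ (-b i)) from funext hfun]
  rw [integral_const_mul]

end
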